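/- arXiv:2008.08961 — 2 statements merged into one kernel-verified Lean document; each statement's English description precedes it below -/
import Mathlib

section
/- Let Λ⟨Σ⟩* be the graded k-linear dual of the anti-commutative face coalgebra, made into a differential graded algebra with product defined by ⟨φψ, u⟩ = ⟨φ ⊗ ψ, Δu⟩ using the sign convention ⟨φ⊗ψ, b⊗c⟩ = (−1)^{deg ψ · deg b} ⟨φ,b⟩⟨ψ,c⟩, and differential defined by ⟨dφ, u⟩ = −(−1)^{deg φ} ⟨φ, d u⟩. Let (t^α) be the basis dual to (u_α) and set t_j = t^{e_j} for the j-th standard basis vector e_j of ℕ^m. Then: (i) t_j t_{j'} = −t_{j'} t_j for all j ≠ j'; (ii) d t_j = −2 t_j² for all j; and (iii) t_{j_1} ⋯ t_{j_k} = 0 for every non-face {j_1,…,j_k} ∉ Σ. -/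
noncomputable section

/-! ### The anti-commutative face coalgebra `Λ⟨Σ⟩` and its dual algebra -/

/-- The support of a multi-index `α : ℕ^m`, as a finset. -/
def suppOf {m : ℕ} (α : Fin m → ℕ) : Finset (Fin m) :=
  Finset.univ.filter fun j => α j ≠ 0

/-- Multi-indices `α ∈ ℕ^m` with `supp α ∈ Σ` and `|α| = n`; these index the basis `u_α`
of the degree-`n` part of the anti-commutative face coalgebra `Λ⟨Σ⟩`. -/
def FaceIndex (m : ℕ) (Sig : Set (Finset (Fin m))) (n : ℕ) : Type :=
  {α : Fin m → ℕ // suppOf α ∈ Sig ∧ ∑ j, α j = n}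

/-- `ε(α, j-1) = α_1 + ⋯ + α_{j-1}`. -/
def epsBelow {m : ℕ} (α : Fin m → ℕ) (j : Fin m) : ℕ :=
  ∑ i ∈ Finset.univ.filter (fun i => i < j), α i

/-- `ε(β,γ) = ∑_{j < j'} γ_j β_{j'}`. -/
def epsPair {m : ℕ} (β γ : Fin m → ℕ) : ℕ :=
  ∑ j' : Fin m, ∑ j ∈ Finset.univ.filter (fun j => j < j'), γ j * β j'

lemma suppOf_update_sub {m : ℕ} {Sig : Set (Finset (Fin m))}
    (hdown : ∀ σ ∈ Sig, ∀ τ ⊆ σ, τ ∈ Sig)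
    (α : Fin m → ℕ) (hα : suppOf α ∈ Sig) (j : Fin m) :
    suppOf (Function.update α j (α j - 1)) ∈ Sig := by
  refine hdown _ hα _ ?_
  intro i hi
  simp only [suppOf, Finset.mem_filter, Finset.mem_univ, true_and] at hi ⊢
  rcases eq_or_ne i j with rfl | hij
  · rw [Function.update_self] at hi; omega
  · rwa [Function.update_of_ne hij] at hi

lemma sum_update_sub {m : ℕ} (α : Fin m → ℕ) {n : ℕ} (hs : ∑ j, α j = n + 1)
    (j : Fin m) (hj : α j ≠ 0) :
    ∑ i, Function.update α j (α j - 1) i = n := by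
  rw [Finset.sum_update_of_mem (Finset.mem_univ j)]
  rw [Finset.sum_eq_sum_sdiff_singleton_add (Finset.mem_univ j) α] at hs
  omega

variable (k : Type) [CommRing k] (m : ℕ) (Sig : Set (Finset (Fin m)))

/-- The degree-`n` part of `Λ⟨Σ⟩`: free with basis the `u_α`, `supp α ∈ Σ`, `|α| = n`. -/
abbrev LamC (n : ℕ) : Type := FaceIndex m Sig n →₀ k

/-- The differential `d u_α = 2 ∑_{α_j > 0 even} (-1)^{ε(α,j-1)} u_{α|j}` of `Λ⟨Σ⟩`. -/
def Lamdiff (hdown : ∀ σ ∈ Sig, ∀ τ ⊆ σ, τ ∈ Sig) (n : ℕ) :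
    LamC k m Sig (n + 1) →ₗ[k] LamC k m Sig n :=
  (Finsupp.lift (LamC k m Sig n) k (FaceIndex m Sig (n + 1))) fun q =>
    ∑ j : Fin m,
      if hj : q.1 j ≠ 0 ∧ Even (q.1 j) then
        ((2 : k) * (-1 : k) ^ epsBelow q.1 j) •
          Finsupp.single
            (⟨Function.update q.1 j (q.1 j - 1),
              suppOf_update_sub hdown q.1 q.2.1 j,
              sum_update_sub q.1 q.2.2 j hj.1⟩) (1 : k)
      else 0

/-- The graded `k`-linear dual `Λ⟨Σ⟩*`. -/
abbrev DualLam (n : ℕ) : Type := LamC k m Sig n →ₗ[k] k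

open scoped Classical in
/-- The pairing of `φ ∈ (Λ⟨Σ⟩*)^p` against `u_β` (zero if `β` is not a degree-`p`
basis index). -/
def pairB {p : ℕ} (φ : DualLam k m Sig p) (β : Fin m → ℕ) : k :=
  if h : suppOf β ∈ Sig ∧ ∑ j, β j = p then φ (Finsupp.single ⟨β, h⟩ 1) else 0

/-- The product on `Λ⟨Σ⟩*` dual to the diagonal `Δ u_α = ∑_{β+γ=α} (-1)^{ε(β,γ)} u_β ⊗ u_γ`,
with the sign convention `⟨φ⊗ψ, b⊗c⟩ = (-1)^{deg ψ · deg b} ⟨φ,b⟩ ⟨ψ,c⟩`. -/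
def mulD (p q : ℕ) (φ : DualLam k m Sig p) (ψ : DualLam k m Sig q) :
    DualLam k m Sig (p + q) :=
  (Finsupp.lift k k (FaceIndex m Sig (p + q))) fun a =>
    ∑ b : (∀ j : Fin m, Fin (a.1 j + 1)),
      ((-1 : k) ^ epsPair (fun j => (b j : ℕ)) (fun j => a.1 j - (b j : ℕ)))
        * ((-1 : k) ^ (q * ∑ j, (b j : ℕ)))
        * pairB k m Sig φ (fun j => (b j : ℕ))
        * pairB k m Sig ψ (fun j => a.1 j - (b j : ℕ))

/-- The differential on the dual, `⟨dφ, u⟩ = -(-1)^{deg φ} ⟨φ, d u⟩`. -/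
def dualDiff (hdown : ∀ σ ∈ Sig, ∀ τ ⊆ σ, τ ∈ Sig) (n : ℕ)
    (φ : DualLam k m Sig n) : DualLam k m Sig (n + 1) :=
  (-(-1 : k) ^ n) • (φ.comp (Lamdiff k m Sig hdown n))

/-- The dual basis element `t_j = t^{e_j}` in degree `1`. -/
def tgen (j : Fin m) : DualLam k m Sig 1 :=
  (Finsupp.lift k k (FaceIndex m Sig 1)) fun a =>
    if a.1 = Pi.single j 1 then (1 : k) else 0

/-- The product `t_{j_k} ⋯ t_{j_1}` associated to a list `[j_1, …, j_k]`. -/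
def tprodList : (l : List (Fin m)) → DualLam k m Sig l.length
  | [] => (Finsupp.lift k k (FaceIndex m Sig 0)) fun _ => (1 : k)
  | j :: l => mulD k m Sig l.length 1 (tprodList l) (tgen k m Sig j)

/-! ### Auxiliary lemmas -/

lemma lift_single_one {k : Type} [CommRing k] {M X : Type} [AddCommMonoid M] [Module k M]
    (f : X → M) (a : X) :
    Finsupp.lift M k X f (Finsupp.single a 1) = f a := by
  simp [Finsupp.lift_apply, Finsupp.sum_single_index]

lemma sum_pi_single_nat {m : ℕ} (j : Fin m) (c : ℕ) :
    ∑ i, Pi.single j c i = c := by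
  simp [Finset.sum_pi_single']

lemma suppOf_pi_single {m : ℕ} (j : Fin m) :
    suppOf (Pi.single j 1 : Fin m → ℕ) = {j} := by
  ext i
  simp [suppOf, Pi.single_apply]

lemma epsPair_single {m : ℕ} (j j' : Fin m) :
    epsPair (Pi.single j 1 : Fin m → ℕ) (Pi.single j' 1) = if j' < j then 1 else 0 := by
  unfold epsPair
  rw [Finset.sum_eq_single j]
  · rw [Pi.single_eq_same]
    simp only [mul_one]
    rw [Finset.sum_pi_single']
    simp
  · intro i' _ hne
    rw [Pi.single_eq_of_ne hne]
    simp
  · simp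

lemma pairB_pos {k : Type} [CommRing k] {m : ℕ} {Sig : Set (Finset (Fin m))} {p : ℕ}
    (φ : DualLam k m Sig p) (β : Fin m → ℕ) (hβ : suppOf β ∈ Sig ∧ ∑ j, β j = p) :
    pairB k m Sig φ β = φ (Finsupp.single ⟨β, hβ⟩ 1) := by
  rw [pairB, dif_pos hβ]

lemma pairB_neg {k : Type} [CommRing k] {m : ℕ} {Sig : Set (Finset (Fin m))} {p : ℕ}
    (φ : DualLam k m Sig p) (β : Fin m → ℕ) (hβ : ¬(suppOf β ∈ Sig ∧ ∑ j, β j = p)) :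
    pairB k m Sig φ β = 0 := by
  rw [pairB, dif_neg hβ]

lemma tgen_single {k : Type} [CommRing k] {m : ℕ} {Sig : Set (Finset (Fin m))}
    (j : Fin m) (a : FaceIndex m Sig 1) :
    tgen k m Sig j (Finsupp.single a 1) = if a.1 = Pi.single j 1 then 1 else 0 := by
  rw [tgen, lift_single_one]

open scoped Classical in
lemma pairB_tgen {k : Type} [CommRing k] {m : ℕ} {Sig : Set (Finset (Fin m))}
    (j : Fin m) (β : Fin m → ℕ) :
    pairB k m Sig (tgen k m Sig j) β =
      if β = Pi.single j 1 ∧ ({j} : Finset (Fin m)) ∈ Sig then 1 else 0 := by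
  by_cases hβ : suppOf β ∈ Sig ∧ ∑ i, β i = 1
  · erw [pairB_pos _ _ hβ, tgen_single]
    by_cases hb : β = Pi.single j 1
    · subst hb
      rw [if_pos rfl, if_pos ⟨rfl, by rw [suppOf_pi_single] at hβ; exact hβ.1⟩]
    · rw [if_neg hb, if_neg (fun h => hb h.1)]
  · rw [pairB_neg _ _ hβ]
    rw [if_neg]
    rintro ⟨rfl, hj⟩
    exact hβ ⟨by rwa [suppOf_pi_single], sum_pi_single_nat j 1⟩

open scoped Classical in
lemma mulD_tgen_tgen {k : Type} [CommRing k] {m : ℕ} {Sig : Set (Finset (Fin m))}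
    (hdown : ∀ σ ∈ Sig, ∀ τ ⊆ σ, τ ∈ Sig) (j j' : Fin m)
    (a : Fin m → ℕ) (h : suppOf a ∈ Sig ∧ ∑ i, a i = 1 + 1) :
    mulD k m Sig 1 1 (tgen k m Sig j) (tgen k m Sig j') (Finsupp.single ⟨a, h⟩ 1) =
      if a = Pi.single j 1 + Pi.single j' 1 then (if j' < j then 1 else -1) else 0 := by
  erw [mulD, lift_single_one]
  by_cases hcase : a = Pi.single j 1 + Pi.single j' 1
  · rw [if_pos hcase]
    have hb0 : ∀ i, (Pi.single j 1 : Fin m → ℕ) i < a i + 1 := by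
      intro i
      rw [hcase, Pi.add_apply]
      omega
    rw [Finset.sum_eq_single (fun i => Fin.mk ((Pi.single j 1 : Fin m → ℕ) i) (hb0 i))]
    · have hbf : (fun i => ((Fin.mk ((Pi.single j 1 : Fin m → ℕ) i) (hb0 i)) : ℕ))
          = (Pi.single j 1 : Fin m → ℕ) := rfl
      have hgf : (fun i => a i - (Pi.single j 1 : Fin m → ℕ) i) = (Pi.single j' 1 : Fin m → ℕ) := by
        funext i
        rw [hcase, Pi.add_apply]
        omega
      simp only [hbf, hgf]
      have hja : ({j} : Finset (Fin m)) ∈ Sig := by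
        refine hdown _ h.1 _ ?_
        intro i hi
        rw [Finset.mem_singleton] at hi
        subst hi
        simp only [suppOf, Finset.mem_filter, Finset.mem_univ, true_and]
        rw [hcase, Pi.add_apply, Pi.single_eq_same]
        omega
      have hja' : ({j'} : Finset (Fin m)) ∈ Sig := by
        refine hdown _ h.1 _ ?_
        intro i hi
        rw [Finset.mem_singleton] at hi
        subst hi
        simp only [suppOf, Finset.mem_filter, Finset.mem_univ, true_and]
        rw [hcase, Pi.add_apply, Pi.single_eq_same]
        omega
      rw [pairB_tgen, pairB_tgen, if_pos ⟨rfl, hja⟩, if_pos ⟨rfl, hja'⟩,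
        epsPair_single, sum_pi_single_nat]
      split_ifs <;> ring
    · intro b _ hne
      rw [pairB_tgen]
      rw [if_neg, mul_zero, zero_mul]
      rintro ⟨hb, -⟩
      apply hne
      funext i
      exact Fin.ext (congrFun hb i)
    · intro habs
      exact absurd (Finset.mem_univ _) habs
  · rw [if_neg hcase]
    apply Finset.sum_eq_zero
    intro b _
    by_cases h1 : (fun i => ((b i : ℕ))) = Pi.single j 1
    · by_cases h2 : (fun i => a i - (b i : ℕ)) = Pi.single j' 1
      · exfalso
        apply hcase
        funext i
        have h1' := congrFun h1 i
        have h2' := congrFun h2 i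
        have h3 : (b i : ℕ) ≤ a i := Nat.lt_succ_iff.mp (b i).isLt
        rw [Pi.add_apply]
        omega
      · rw [pairB_tgen j', if_neg (fun h => h2 h.1), mul_zero]
    · rw [pairB_tgen j, if_neg (fun h => h1 h.1), mul_zero, zero_mul]

open scoped Classical in
lemma dualDiff_tgen {k : Type} [CommRing k] {m : ℕ} {Sig : Set (Finset (Fin m))}
    (hdown : ∀ σ ∈ Sig, ∀ τ ⊆ σ, τ ∈ Sig) (j : Fin m)
    (a : Fin m → ℕ) (h : suppOf a ∈ Sig ∧ ∑ i, a i = 1 + 1) :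
    dualDiff k m Sig hdown 1 (tgen k m Sig j) (Finsupp.single ⟨a, h⟩ 1) =
      if a = Pi.single j 1 + Pi.single j 1 then 2 else 0 := by
  erw [dualDiff, LinearMap.smul_apply, LinearMap.comp_apply, Lamdiff, lift_single_one,
    map_sum]
  have h1 : -(-1 : k) ^ 1 = 1 := by norm_num
  rw [h1, one_smul]
  have hsub : ((⟨a, h⟩ : FaceIndex m Sig (1 + 1)) : Fin m → ℕ) = a := rfl
  simp only [hsub]
  by_cases hcase : a = Pi.single j 1 + Pi.single j 1
  · rw [if_pos hcase]
    rw [Finset.sum_eq_single j]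
    · have hcond : a j ≠ 0 ∧ Even (a j) := by
        have : a j = 2 := by rw [hcase, Pi.add_apply, Pi.single_eq_same]
        rw [this]
        exact ⟨by norm_num, by norm_num⟩
      erw [dif_pos hcond, map_smul, tgen_single, smul_eq_mul]
      have hupd : Function.update a j (a j - 1) = (Pi.single j 1 : Fin m → ℕ) := by
        funext i
        rcases eq_or_ne i j with rfl | hij
        · rw [Function.update_self, Pi.single_eq_same, hcase, Pi.add_apply, Pi.single_eq_same]
        · rw [Function.update_of_ne hij, Pi.single_eq_of_ne hij, hcase]
          simp [Pi.single_eq_of_ne hij]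
      rw [if_pos hupd]
      have heps : epsBelow a j = 0 := by
        apply Finset.sum_eq_zero
        intro i hi
        rw [Finset.mem_filter] at hi
        rw [hcase]
        simp [Pi.single_eq_of_ne (ne_of_lt hi.2)]
      rw [heps]
      norm_num
    · intro i _ hne
      rw [dif_neg]
      · exact map_zero _
      rintro ⟨h1, -⟩
      rw [hcase] at h1
      simp [Pi.single_eq_of_ne hne] at h1
    · intro habs
      exact absurd (Finset.mem_univ _) habs
  · rw [if_neg hcase]
    apply Finset.sum_eq_zero
    intro i _
    by_cases hc : a i ≠ 0 ∧ Even (a i)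
    · erw [dif_pos hc, map_smul, tgen_single, smul_eq_mul]
      rw [if_neg, mul_zero]
      intro hupd0
      have hupd : Function.update a i (a i - 1) = (Pi.single j 1 : Fin m → ℕ) := hupd0
      rcases eq_or_ne i j with rfl | hij
      · apply hcase
        funext i'
        have h2 := congrFun hupd i'
        rw [Pi.add_apply]
        rcases eq_or_ne i' i with rfl | h3
        · rw [Function.update_self, Pi.single_eq_same] at h2
          rw [Pi.single_eq_same]
          omega
        · rw [Function.update_of_ne h3] at h2
          rw [Pi.single_eq_of_ne h3, h2, Pi.single_eq_of_ne h3]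
          omega
      · have h2 := congrFun hupd i
        rw [Function.update_self, Pi.single_eq_of_ne hij] at h2
        have he := hc.2
        rw [Nat.even_iff] at he
        have h4 := hc.1
        omega
    · rw [dif_neg hc]
      exact map_zero _

open scoped Classical in
lemma tprod_single_eq_zero {k : Type} [CommRing k] {m : ℕ} {Sig : Set (Finset (Fin m))} :
    ∀ (l : List (Fin m)) (a : Fin m → ℕ)
      (h : suppOf a ∈ Sig ∧ ∑ i, a i = l.length),
      a ≠ (fun i => l.count i) →
      tprodList k m Sig l (Finsupp.single ⟨a, h⟩ 1) = 0
  | [], a, h, hne => by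
    exfalso
    apply hne
    funext i
    have := (Finset.sum_eq_zero_iff.mp h.2) i (Finset.mem_univ i)
    simp only [this, List.count_nil]
  | j :: l, a, h, hne => by
    rw [tprodList, mulD]
    erw [lift_single_one]
    apply Finset.sum_eq_zero
    intro b _
    by_cases h1 : (fun i => a i - (b i : ℕ)) = (Pi.single j 1 : Fin m → ℕ)
    · by_cases h2 : (fun i => ((b i : ℕ))) = fun i => l.count i
      · exfalso
        apply hne
        funext i
        have h1' := congrFun h1 i
        have h2' := congrFun h2 i
        have h3 : (b i : ℕ) ≤ a i := Nat.lt_succ_iff.mp (b i).isLt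
        have h4 : List.count i (j :: l) = List.count i l + if i = j then 1 else 0 := by
          rw [List.count_cons]
          by_cases hij : i = j
          · simp [hij]
          · simp [hij, Ne.symm hij]
        rw [h4, ← h2']
        rw [Pi.single_apply] at h1'
        split_ifs at h1' ⊢ <;> omega
      · by_cases h5 : suppOf (fun i => ((b i : ℕ))) ∈ Sig ∧ ∑ i, ((b i : ℕ)) = l.length
        · rw [pairB_pos _ _ h5, tprod_single_eq_zero l _ h5 h2, mul_zero, zero_mul]
        · rw [pairB_neg _ _ h5, mul_zero, zero_mul]
    · rw [pairB_tgen, if_neg (fun hx => h1 hx.1), mul_zero]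

lemma suppOf_count {m : ℕ} (l : List (Fin m)) :
    suppOf (fun i => l.count i) = l.toFinset := by
  ext i
  simp only [suppOf, Finset.mem_filter, Finset.mem_univ, true_and, List.mem_toFinset]
  rw [← List.count_pos_iff]
  omega

/-- In the differential graded dual `Λ⟨Σ⟩*` of the anti-commutative
face coalgebra of a simplicial complex `Σ`:
(i) the degree-one elements `t_j` pairwise anti-commute;
(ii) `d t_j = -2 t_j²`;
(iii) the product of the `t_j` over any non-face of `Σ` vanishes. -/
theorem dual_face_coalgebra_relations
    (k : Type) [CommRing k] (m : ℕ) (Sig : Set (Finset (Fin m)))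
    (hempty : ∅ ∈ Sig) (hdown : ∀ σ ∈ Sig, ∀ τ ⊆ σ, τ ∈ Sig) :
    (∀ j j' : Fin m, j ≠ j' →
        mulD k m Sig 1 1 (tgen k m Sig j) (tgen k m Sig j')
          = - mulD k m Sig 1 1 (tgen k m Sig j') (tgen k m Sig j)) ∧
    (∀ j : Fin m,
        dualDiff k m Sig hdown 1 (tgen k m Sig j)
          = (-2 : k) • mulD k m Sig 1 1 (tgen k m Sig j) (tgen k m Sig j)) ∧
    (∀ l : List (Fin m), l.Nodup → l.toFinset ∉ Sig → tprodList k m Sig l = 0) := by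
  refine ⟨?_, ?_, ?_⟩
  · intro j j' hjj
    refine Finsupp.lhom_ext fun a c => ?_
    obtain ⟨a, h⟩ := a
    have hc : Finsupp.single (⟨a, h⟩ : FaceIndex m Sig (1 + 1)) c
        = c • Finsupp.single (⟨a, h⟩ : FaceIndex m Sig (1 + 1)) 1 := by
      rw [Finsupp.smul_single, smul_eq_mul, mul_one]
    erw [hc, map_smul, map_smul]
    congr 1
    erw [LinearMap.neg_apply, mulD_tgen_tgen hdown j j' a h, mulD_tgen_tgen hdown j' j a h]
    by_cases hA : a = Pi.single j 1 + Pi.single j' 1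
    · rw [if_pos hA, if_pos (show a = Pi.single j' 1 + Pi.single j 1 by rw [hA, add_comm])]
      rcases lt_or_gt_of_ne hjj with hlt | hgt
      · rw [if_neg (show ¬ j' < j from fun hx => absurd (hlt.trans hx) (lt_irrefl _)),
          if_pos hlt]
      · rw [if_pos hgt, if_neg (show ¬ j < j' from fun hx => absurd (hgt.trans hx) (lt_irrefl _))]
        norm_num
    · rw [if_neg hA,
        if_neg (show ¬ a = Pi.single j' 1 + Pi.single j 1 from fun hx => hA (by rw [hx, add_comm])),
        neg_zero]
  · intro j
    refine Finsupp.lhom_ext fun a c => ?_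
    obtain ⟨a, h⟩ := a
    have hc : Finsupp.single (⟨a, h⟩ : FaceIndex m Sig (1 + 1)) c
        = c • Finsupp.single (⟨a, h⟩ : FaceIndex m Sig (1 + 1)) 1 := by
      rw [Finsupp.smul_single, smul_eq_mul, mul_one]
    erw [hc, map_smul, map_smul]
    congr 1
    erw [dualDiff_tgen hdown j a h, LinearMap.smul_apply, mulD_tgen_tgen hdown j j a h,
      smul_eq_mul]
    by_cases hA : a = Pi.single j 1 + Pi.single j 1
    · rw [if_pos hA, if_pos hA, if_neg (lt_irrefl j)]
      norm_num
    · rw [if_neg hA, if_neg hA, mul_zero]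
  · intro l _ hnot
    refine Finsupp.lhom_ext fun a c => ?_
    obtain ⟨a, h⟩ := a
    have hc : Finsupp.single (⟨a, h⟩ : FaceIndex m Sig l.length) c
        = c • Finsupp.single (⟨a, h⟩ : FaceIndex m Sig l.length) 1 := by
      rw [Finsupp.smul_single, smul_eq_mul, mul_one]
    erw [hc, map_smul, map_smul, LinearMap.zero_apply, smul_zero]
    by_cases ha : a = fun i => l.count i
    · exfalso
      apply hnot
      have := h.1
      rw [ha, suppOf_count] at this
      exact this
    · erw [tprod_single_eq_zero l a h ha, smul_zero]


end
end

section
/- Let 𝐙_Σ = { x ∈ ℝ^m : {j : x_j = 0} ∈ Σ } be the complement of the real coordinate subspace arrangement determined by Σ; it contains Z_Σ and carries the coordinatewise sign action of G = {±1}^m. If K ≤ G acts freely on Z_Σ, then the inclusion Z_Σ/K ↪ 𝐙_Σ/K is a strong deformation retract: there exists a homotopy F : (𝐙_Σ/K) × [0,1] → 𝐙_Σ/K with F(·,0) the identity, F(·,1) taking values in Z_Σ/K, and F(z,t) = z for all z ∈ Z_Σ/K and all t; moreover F can be chosen equivariant for the induced action of G/K. In particular, Z_Σ/K → 𝐙_Σ/K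 is a homotopy equivalence. -/
noncomputable section


/-! ### The real moment-angle complex and real toric spaces -/

/-- The 2-torus `G = (ℤ/2)^m`. -/
abbrev Gtorus (m : ℕ) : Type := Fin m → ZMod 2

/-- The action of `(ℤ/2)^m` on `ℝ^m` by coordinatewise sign changes. -/
def signAct {m : ℕ} (g : Gtorus m) (x : Fin m → ℝ) : Fin m → ℝ :=
  fun j => if g j = 0 then x j else - x j

lemma zmod2_cases : ∀ a : ZMod 2, a = 0 ∨ a = 1 := by decide

lemma signAct_zero {m : ℕ} (x : Fin m → ℝ) : signAct (0 : Gtorus m) x = x := by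
  funext j; simp [signAct]

lemma signAct_add {m : ℕ} (g g' : Gtorus m) (x : Fin m → ℝ) :
    signAct (g + g') x = signAct g (signAct g' x) := by
  have h2 : (1 + 1 : ZMod 2) = 0 := by decide
  have h1 : (1 : ZMod 2) ≠ 0 := by decide
  funext j
  show (if g j + g' j = 0 then x j else - x j) = _
  rcases zmod2_cases (g j) with h | h <;> rcases zmod2_cases (g' j) with h' | h' <;>
    simp [signAct, h, h', h2, h1]

lemma add_self_eq_zero' {m : ℕ} (g : Gtorus m) : g + g = 0 := by
  funext j
  show g j + g j = 0
  rcases zmod2_cases (g j) with h | h <;> rw [h] <;> decide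

lemma signAct_invol {m : ℕ} (g : Gtorus m) (x : Fin m → ℝ) :
    signAct g (signAct g x) = x := by
  rw [← signAct_add, add_self_eq_zero', signAct_zero]

/-- The real moment-angle complex `Z_Σ ⊆ [-1,1]^m ⊆ ℝ^m`. -/
def Zma (m : ℕ) (Sig : Set (Finset (Fin m))) : Set (Fin m → ℝ) :=
  ⋃ σ ∈ Sig, {x | (∀ j, x j ∈ Set.Icc (-1 : ℝ) 1) ∧ ∀ j ∉ σ, x j = 1 ∨ x j = -1}

lemma signAct_mem_Zma {m : ℕ} {Sig : Set (Finset (Fin m))} (g : Gtorus m)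
    {x : Fin m → ℝ} (hx : x ∈ Zma m Sig) : signAct g x ∈ Zma m Sig := by
  obtain ⟨S, ⟨σ, rfl⟩, hS⟩ := hx
  simp only [Set.mem_iUnion] at hS
  obtain ⟨hσ, hIcc, hbd⟩ := hS
  refine Set.mem_iUnion.2 ⟨σ, Set.mem_iUnion.2 ⟨hσ, ?_, ?_⟩⟩
  · intro j
    have := hIcc j
    simp only [Set.mem_Icc] at this ⊢
    unfold signAct
    split <;> constructor <;> linarith [this.1, this.2]
  · intro j hj
    rcases hbd j hj with h | h <;> unfold signAct <;> split <;> simp [h]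

/-- The orbit equivalence relation of a subgroup `K ≤ (ℤ/2)^m` on `Z_Σ`. -/
def zSetoid (m : ℕ) (Sig : Set (Finset (Fin m))) (K : AddSubgroup (Gtorus m)) :
    Setoid (Zma m Sig) where
  r x y := ∃ g ∈ K, signAct g x.1 = y.1
  iseqv := by
    constructor
    · exact fun x => ⟨0, K.zero_mem, signAct_zero _⟩
    · rintro x y ⟨g, hg, h⟩
      exact ⟨g, hg, by rw [← h, signAct_invol]⟩
    · rintro x y z ⟨g, hg, h⟩ ⟨g', hg', h'⟩
      exact ⟨g' + g, K.add_mem hg' hg, by rw [signAct_add, h, h']⟩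

/-- The real toric space `X_Σ = Z_Σ / K`, with the quotient topology. -/
def RealToricSpace (m : ℕ) (Sig : Set (Finset (Fin m))) (K : AddSubgroup (Gtorus m)) : Type :=
  Quotient (zSetoid m Sig K)

instance (m : ℕ) (Sig : Set (Finset (Fin m))) (K : AddSubgroup (Gtorus m)) :
    TopologicalSpace (RealToricSpace m Sig K) :=
  instTopologicalSpaceQuotient

open scoped Classical in
/-- The complement `𝐙_Σ = { x ∈ ℝ^m : {j : x_j = 0} ∈ Σ }` of the real coordinate
subspace arrangement determined by `Σ`. -/
def bigZ (m : ℕ) (Sig : Set (Finset (Fin m))) : Set (Fin m → ℝ) :=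
  {x | (Finset.univ.filter fun j => x j = 0) ∈ Sig}

lemma signAct_mem_bigZ {m : ℕ} {Sig : Set (Finset (Fin m))} (g : Gtorus m)
    {x : Fin m → ℝ} (hx : x ∈ bigZ m Sig) : signAct g x ∈ bigZ m Sig := by
  classical
  show (Finset.univ.filter fun j => signAct g x j = 0) ∈ Sig
  have : (Finset.univ.filter fun j => signAct g x j = 0)
      = (Finset.univ.filter fun j => x j = 0) := by
    apply Finset.filter_congr
    intro j _
    unfold signAct
    split <;> simp
  rw [this]
  exact hx

lemma Zma_subset_bigZ {m : ℕ} {Sig : Set (Finset (Fin m))}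
    (hdown : ∀ σ ∈ Sig, ∀ τ ⊆ σ, τ ∈ Sig) :
    Zma m Sig ⊆ bigZ m Sig := by
  classical
  rintro x hx
  obtain ⟨S, ⟨σ, rfl⟩, hS⟩ := hx
  simp only [Set.mem_iUnion] at hS
  obtain ⟨hσ, _, hbd⟩ := hS
  refine hdown σ hσ _ ?_
  intro j hj
  simp only [Finset.mem_filter, Finset.mem_univ, true_and] at hj
  by_contra hjσ
  rcases hbd j hjσ with h | h <;> rw [hj] at h <;> norm_num at h

/-- The orbit relation of `K` on `𝐙_Σ`. -/
def bigSetoid (m : ℕ) (Sig : Set (Finset (Fin m))) (K : AddSubgroup (Gtorus m)) :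
    Setoid (bigZ m Sig) where
  r x y := ∃ g ∈ K, signAct g x.1 = y.1
  iseqv := by
    constructor
    · exact fun x => ⟨0, K.zero_mem, signAct_zero _⟩
    · rintro x y ⟨g, hg, h⟩
      exact ⟨g, hg, by rw [← h, signAct_invol]⟩
    · rintro x y z ⟨g, hg, h⟩ ⟨g', hg', h'⟩
      exact ⟨g' + g, K.add_mem hg' hg, by rw [signAct_add, h, h']⟩

/-- The quotient `𝐙_Σ/K` with its quotient topology. -/
def BigQuot (m : ℕ) (Sig : Set (Finset (Fin m))) (K : AddSubgroup (Gtorus m)) : Type :=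
  Quotient (bigSetoid m Sig K)

instance (m : ℕ) (Sig : Set (Finset (Fin m))) (K : AddSubgroup (Gtorus m)) :
    TopologicalSpace (BigQuot m Sig K) := instTopologicalSpaceQuotient

/-- The inclusion `Z_Σ/K ↪ 𝐙_Σ/K`. -/
def subQuot (m : ℕ) (Sig : Set (Finset (Fin m))) (K : AddSubgroup (Gtorus m))
    (hdown : ∀ σ ∈ Sig, ∀ τ ⊆ σ, τ ∈ Sig) :
    RealToricSpace m Sig K → BigQuot m Sig K :=
  Quotient.map (fun z => ⟨z.1, Zma_subset_bigZ hdown z.2⟩)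
    (by rintro z z' ⟨g, hg, h⟩; exact ⟨g, hg, h⟩)

/-- The action of `G = (ℤ/2)^m` on `𝐙_Σ/K` descending to the induced `G/K`-action. -/
def bigAct (m : ℕ) (Sig : Set (Finset (Fin m))) (K : AddSubgroup (Gtorus m))
    (g : Gtorus m) : BigQuot m Sig K → BigQuot m Sig K :=
  Quotient.map (fun z => ⟨signAct g z.1, signAct_mem_bigZ g z.2⟩)
    (by
      rintro z z' ⟨κ, hκ, h⟩
      refine ⟨κ, hκ, ?_⟩
      show signAct κ (signAct g z.1) = signAct g z'.1
      rw [← signAct_add, add_comm, signAct_add, h])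

namespace SDRaux

/-! clamp -/

def clampR (s : ℝ) : ℝ := max (-1) (min 1 s)

lemma continuous_clampR : Continuous clampR :=
  continuous_const.max (continuous_const.min continuous_id)

lemma clampR_mem (s : ℝ) : -1 ≤ clampR s ∧ clampR s ≤ 1 :=
  ⟨le_max_left _ _, max_le (by norm_num) (min_le_left _ _)⟩

lemma clampR_eq_self {s : ℝ} (h1 : -1 ≤ s) (h2 : s ≤ 1) : clampR s = s := by
  rw [clampR, min_eq_right h2, max_eq_right h1]

lemma clampR_of_one_le {s : ℝ} (h : 1 ≤ s) : clampR s = 1 := by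
  rw [clampR, min_eq_left h]; norm_num

lemma clampR_of_le_negone {s : ℝ} (h : s ≤ -1) : clampR s = -1 := by
  rw [clampR, min_eq_right (by linarith), max_eq_left h]

lemma clampR_neg (s : ℝ) : clampR (-s) = - clampR s := by
  rcases le_total 1 s with h | h
  · rw [clampR_of_one_le h, clampR_of_le_negone (by linarith)]
  · rcases le_total s (-1) with h' | h'
    · rw [clampR_of_le_negone h', clampR_of_one_le (by linarith)]; norm_num
    · rw [clampR_eq_self (by linarith) (by linarith), clampR_eq_self h' h]

lemma clampR_pos {s : ℝ} (h : 0 < s) : 0 < clampR s :=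
  lt_max_iff.2 (Or.inr (lt_min one_pos h))

lemma clampR_neg' {s : ℝ} (h : s < 0) : clampR s < 0 := by
  have := clampR_pos (neg_pos.2 h); rw [clampR_neg] at this; linarith

lemma clampR_zero : clampR 0 = 0 := clampR_eq_self (by norm_num) (by norm_num)

lemma clampR_eq_zero_iff {s : ℝ} : clampR s = 0 ↔ s = 0 := by
  constructor
  · intro h
    rcases lt_trichotomy s 0 with hs | hs | hs
    · exact absurd h (ne_of_lt (clampR_neg' hs))
    · exact hs
    · exact absurd h (ne_of_gt (clampR_pos hs))
  · rintro rfl; exact clampR_zero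

/-! folds -/

lemma continuous_fold_min {X α : Type*} [TopologicalSpace X] (s : Finset α) (b : ℝ)
    (f : α → X → ℝ) (hf : ∀ j, Continuous (f j)) :
    Continuous fun x => s.fold min b (fun j => f j x) := by
  induction s using Finset.cons_induction with
  | empty => simpa using continuous_const
  | cons a s ha ih => simpa only [Finset.fold_cons] using (hf a).min ih

lemma continuous_fold_max {X α : Type*} [TopologicalSpace X] (s : Finset α) (b : ℝ)
    (f : α → X → ℝ) (hf : ∀ j, Continuous (f j)) :
    Continuous fun x => s.fold max b (fun j => f j x) := by
  induction s using Finset.cons_induction with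
  | empty => simpa using continuous_const
  | cons a s ha ih => simpa only [Finset.fold_cons] using (hf a).max ih

lemma fold_max_attained {α : Type*} (s : Finset α) (b : ℝ) (f : α → ℝ) :
    s.fold max b f = b ∨ ∃ a ∈ s, s.fold max b f = f a := by
  induction s using Finset.cons_induction with
  | empty => left; simp
  | cons a s ha ih =>
    rw [Finset.fold_cons]
    rcases max_cases (f a) (s.fold max b f) with ⟨h, _⟩ | ⟨h, _⟩
    · exact Or.inr ⟨a, Finset.mem_cons_self a s, h⟩
    · rcases ih with h' | ⟨c, hc, h'⟩
      · exact Or.inl (h.trans h')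
      · exact Or.inr ⟨c, Finset.mem_cons_of_mem hc, h.trans h'⟩

end SDRaux

namespace SDRaux

/-! ### the function ν -/

def nuF {m : ℕ} (σ : Finset (Fin m)) (x : Fin m → ℝ) : ℝ :=
  (Finset.univ \ σ).fold min 1 fun j => min 1 |x j|

open scoped Classical in
def SigF {m : ℕ} (Sig : Set (Finset (Fin m))) : Finset (Finset (Fin m)) :=
  insert ∅ (Finset.univ.filter fun σ => σ ∈ Sig)

def nu {m : ℕ} (Sig : Set (Finset (Fin m))) (x : Fin m → ℝ) : ℝ :=
  (SigF Sig).fold max 0 fun σ => nuF σ x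

variable {m : ℕ} {Sig : Set (Finset (Fin m))} {σ : Finset (Fin m)} {x : Fin m → ℝ}

lemma nuF_le_one : nuF σ x ≤ 1 := (Finset.fold_min_le _).2 (Or.inl le_rfl)

lemma nuF_nonneg : 0 ≤ nuF σ x :=
  (Finset.le_fold_min _).2 ⟨zero_le_one, fun j _ => le_min zero_le_one (abs_nonneg _)⟩

lemma nuF_le_abs {j : Fin m} (hj : j ∉ σ) : nuF σ x ≤ |x j| :=
  le_trans
    ((Finset.fold_min_le _).2 (Or.inr ⟨j, Finset.mem_sdiff.2 ⟨Finset.mem_univ _, hj⟩, le_rfl⟩))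
    (min_le_right _ _)

lemma nuF_pos (h : ∀ j ∉ σ, x j ≠ 0) : 0 < nuF σ x :=
  (Finset.lt_fold_min _).2 ⟨one_pos, fun j hj =>
    lt_min one_pos (abs_pos.2 (h j (Finset.mem_sdiff.1 hj).2))⟩

lemma nuF_eq_one (h : ∀ j ∉ σ, |x j| = 1) : nuF σ x = 1 :=
  le_antisymm nuF_le_one ((Finset.le_fold_min _).2 ⟨le_rfl, fun j hj => by
    rw [h j (Finset.mem_sdiff.1 hj).2]; simp⟩)

lemma nu_nonneg : 0 ≤ nu Sig x := (Finset.le_fold_max _).2 (Or.inl le_rfl)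

lemma nu_le_one : nu Sig x ≤ 1 :=
  (Finset.fold_max_le _).2 ⟨zero_le_one, fun _ _ => nuF_le_one⟩

lemma nuF_le_nu (h : σ ∈ SigF Sig) : nuF σ x ≤ nu Sig x :=
  (Finset.le_fold_max _).2 (Or.inr ⟨σ, h, le_rfl⟩)

lemma mem_SigF_of_mem (h : σ ∈ Sig) : σ ∈ SigF Sig := by
  classical
  simp [SigF, h]

lemma mem_of_mem_SigF (hempty : ∅ ∈ Sig) (h : σ ∈ SigF Sig) : σ ∈ Sig := by
  classical
  rcases Finset.mem_insert.1 h with rfl | h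
  · exact hempty
  · exact (Finset.mem_filter.1 h).2

lemma nu_pos (hx : x ∈ bigZ m Sig) : 0 < nu Sig x := by
  classical
  have h0 : (Finset.univ.filter fun j => x j = 0) ∈ Sig := hx
  refine lt_of_lt_of_le (nuF_pos fun j hj hxj => ?_) (nuF_le_nu (mem_SigF_of_mem h0))
  exact hj (Finset.mem_filter.2 ⟨Finset.mem_univ _, hxj⟩)

lemma abs_signAct (g : Gtorus m) (x : Fin m → ℝ) (j : Fin m) :
    |signAct g x j| = |x j| := by
  unfold signAct; split <;> simp

lemma nuF_signAct {g : Gtorus m} : nuF σ (signAct g x) = nuF σ x :=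
  Finset.fold_congr fun j _ => by rw [abs_signAct]

lemma nu_signAct {g : Gtorus m} : nu Sig (signAct g x) = nu Sig x :=
  Finset.fold_congr fun σ _ => nuF_signAct

lemma nu_eq_one (hx : x ∈ Zma m Sig) : nu Sig x = 1 := by
  obtain ⟨S, ⟨σ, rfl⟩, hS⟩ := hx
  simp only [Set.mem_iUnion] at hS
  obtain ⟨hσ, _, hbd⟩ := hS
  refine le_antisymm nu_le_one ?_
  calc (1:ℝ) = nuF σ x := (nuF_eq_one fun j hj => by rcases hbd j hj with h | h <;> simp [h]).symm
  _ ≤ nu Sig x := nuF_le_nu (mem_SigF_of_mem hσ)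

lemma continuous_nu (Sig : Set (Finset (Fin m))) : Continuous (nu Sig) :=
  continuous_fold_max _ _ _ fun σ =>
    continuous_fold_min _ _ _ fun j => continuous_const.min (continuous_apply j).abs

end SDRaux

namespace SDRaux

variable {m : ℕ} {Sig : Set (Finset (Fin m))}

def denom (Sig : Set (Finset (Fin m))) (x : Fin m → ℝ) (s : ℝ) : ℝ :=
  (1 - s) + s * nu Sig x

lemma denom_pos {x : Fin m → ℝ} {s : ℝ} (hx : x ∈ bigZ m Sig) (hs : s ≤ 1) :
    0 < denom Sig x s := by
  have h1 := nu_pos hx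
  have h2 : nu Sig x ≤ 1 := nu_le_one
  unfold denom
  rcases le_or_gt s 0 with h | h
  · nlinarith [mul_nonneg (neg_nonneg.2 h) (sub_nonneg.2 h2)]
  · nlinarith [mul_pos h h1]

def Hfun (Sig : Set (Finset (Fin m))) (x : Fin m → ℝ) (t : ℝ) : Fin m → ℝ :=
  if t ≤ 1/2 then fun j => (1 - 2*t) * x j + (2*t) * clampR (x j)
  else fun j => clampR (x j / denom Sig x (2*t - 1))

lemma Hfun_zero (x : Fin m → ℝ) : Hfun Sig x 0 = x := by
  unfold Hfun
  rw [if_pos (by norm_num)]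
  funext j; norm_num

lemma Hfun_fix {x : Fin m → ℝ} (hx : x ∈ Zma m Sig) (t : ℝ) : Hfun Sig x t = x := by
  have habs : ∀ j, clampR (x j) = x j := by
    obtain ⟨S, ⟨σ, rfl⟩, hS⟩ := hx
    simp only [Set.mem_iUnion] at hS
    obtain ⟨_, hIcc, _⟩ := hS
    exact fun j => clampR_eq_self (hIcc j).1 (hIcc j).2
  have hnu : nu Sig x = 1 := nu_eq_one hx
  have hden : denom Sig x (2*t - 1) = 1 := by rw [denom, hnu]; ring
  unfold Hfun
  split
  · funext j; rw [habs j]; ring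
  · funext j; rw [hden, div_one, habs j]

lemma stage1_eq_zero_iff {s t : ℝ} (h0 : 0 ≤ t) (h1 : t ≤ 1/2) :
    (1 - 2*t) * s + (2*t) * clampR s = 0 ↔ s = 0 := by
  constructor
  · intro h
    rcases lt_trichotomy s 0 with hs | hs | hs
    · have hc := clampR_neg' hs
      nlinarith [mul_nonneg (by linarith : (0:ℝ) ≤ 1 - 2*t) (by linarith : (0:ℝ) ≤ -s),
        mul_nonneg (by linarith : (0:ℝ) ≤ 2*t) (by linarith : (0:ℝ) ≤ -clampR s)]
    · exact hs
    · have hc := clampR_pos hs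
      nlinarith [mul_nonneg (by linarith : (0:ℝ) ≤ 1 - 2*t) hs.le,
        mul_nonneg (by linarith : (0:ℝ) ≤ 2*t) hc.le]
  · rintro rfl; rw [clampR_zero]; ring

lemma Hfun_mem_bigZ {x : Fin m → ℝ} {t : ℝ} (hx : x ∈ bigZ m Sig)
    (h0 : 0 ≤ t) (h1 : t ≤ 1) : Hfun Sig x t ∈ bigZ m Sig := by
  classical
  have key : ∀ j, Hfun Sig x t j = 0 ↔ x j = 0 := by
    intro j
    unfold Hfun
    by_cases ht : t ≤ 1/2
    · rw [if_pos ht]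
      exact stage1_eq_zero_iff h0 ht
    · rw [if_neg ht]
      have hd := denom_pos (Sig := Sig) (s := 2*t - 1) hx (by linarith)
      rw [clampR_eq_zero_iff, div_eq_zero_iff]
      exact ⟨fun h => h.resolve_right (ne_of_gt hd), Or.inl⟩
  show (Finset.univ.filter fun j => Hfun Sig x t j = 0) ∈ Sig
  have heq : (Finset.univ.filter fun j => Hfun Sig x t j = 0)
      = (Finset.univ.filter fun j => x j = 0) := by
    apply Finset.filter_congr
    intro j _
    rw [key j]
  rw [heq]; exact hx

lemma Hfun_one_mem_Zma (hempty : ∅ ∈ Sig) {x : Fin m → ℝ} (hx : x ∈ bigZ m Sig) :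
    Hfun Sig x 1 ∈ Zma m Sig := by
  have hpos := nu_pos hx
  have hH : Hfun Sig x 1 = fun j => clampR (x j / nu Sig x) := by
    unfold Hfun
    rw [if_neg (by norm_num)]
    have : denom Sig x (2*1 - 1) = nu Sig x := by rw [denom]; ring
    rw [this]
  rcases fold_max_attained (SigF Sig) 0 (fun σ => nuF σ x) with h | ⟨σ, hσmem, hσ⟩
  · exact absurd h (by rw [← nu]; exact ne_of_gt hpos)
  · have hnuσ : nu Sig x = nuF σ x := hσ
    refine Set.mem_iUnion.2 ⟨σ, Set.mem_iUnion.2 ⟨mem_of_mem_SigF hempty hσmem, ?_, ?_⟩⟩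
    · intro j
      rw [hH]
      exact Set.mem_Icc.2 ⟨(clampR_mem _).1, (clampR_mem _).2⟩
    · intro j hj
      have hle : nu Sig x ≤ |x j| := hnuσ ▸ nuF_le_abs hj
      rw [hH]
      rcases le_or_gt 0 (x j) with h | h
      · left
        apply clampR_of_one_le
        rw [le_div_iff₀ hpos]
        rw [abs_of_nonneg h] at hle; linarith
      · right
        apply clampR_of_le_negone
        rw [div_le_iff₀ hpos]
        rw [abs_of_neg h] at hle; linarith

lemma Hfun_signAct (g : Gtorus m) (x : Fin m → ℝ) (t : ℝ) :
    Hfun Sig (signAct g x) t = signAct g (Hfun Sig x t) := by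
  have hd : ∀ s, denom Sig (signAct g x) s = denom Sig x s := fun s => by
    unfold denom; rw [nu_signAct]
  funext j
  by_cases ht : t ≤ 1/2
  · simp only [Hfun, if_pos ht, signAct]
    by_cases hg : g j = 0
    · simp [hg]
    · simp only [hg, if_false]
      rw [clampR_neg]; ring
  · simp only [Hfun, if_neg ht, signAct]
    by_cases hg : g j = 0
    · simp [hg, hd]
    · simp only [hg, if_false]
      rw [hd, neg_div, clampR_neg]

lemma continuous_Hsub (Sig : Set (Finset (Fin m))) :
    Continuous fun p : bigZ m Sig × unitInterval => Hfun Sig p.1.1 p.2.1 := by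
  have hx : Continuous fun p : bigZ m Sig × unitInterval => (p.1.1 : Fin m → ℝ) :=
    continuous_subtype_val.comp continuous_fst
  have hxj : ∀ j, Continuous fun p : bigZ m Sig × unitInterval => p.1.1 j :=
    fun j => (continuous_apply j).comp hx
  have ht : Continuous fun p : bigZ m Sig × unitInterval => (p.2.1 : ℝ) :=
    continuous_subtype_val.comp continuous_snd
  have hnu : Continuous fun p : bigZ m Sig × unitInterval => nu Sig p.1.1 :=
    (continuous_nu Sig).comp hx
  have hden : Continuous fun p : bigZ m Sig × unitInterval =>
      denom Sig p.1.1 (2 * p.2.1 - 1) := by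
    unfold denom
    fun_prop
  show Continuous fun p : bigZ m Sig × unitInterval =>
    if p.2.1 ≤ 1/2 then (fun j => (1 - 2*p.2.1) * p.1.1 j + (2*p.2.1) * clampR (p.1.1 j))
    else fun j => clampR (p.1.1 j / denom Sig p.1.1 (2*p.2.1 - 1))
  apply Continuous.if_le
  · refine continuous_pi fun j => ?_
    exact ((continuous_const.sub (continuous_const.mul ht)).mul (hxj j)).add
      ((continuous_const.mul ht).mul (continuous_clampR.comp (hxj j)))
  · refine continuous_pi fun j => ?_
    refine continuous_clampR.comp ((hxj j).div hden fun p => ?_)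
    exact ne_of_gt (denom_pos p.1.2 (by linarith [p.2.2.2]))
  · exact ht
  · exact continuous_const
  · intro p hp
    funext j
    rw [hp]
    have : denom Sig p.1.1 (2 * (1/2 : ℝ) - 1) = 1 := by rw [denom]; ring
    rw [this, div_one]
    norm_num

end SDRaux

namespace SDRaux
open Topology

variable {m : ℕ} {Sig : Set (Finset (Fin m))} {K : AddSubgroup (Gtorus m)}

lemma isQuotientMap_qmk : IsQuotientMap (Quotient.mk (bigSetoid m Sig K)) := by
  letI := bigSetoid m Sig K
  exact isQuotientMap_quotient_mk'

lemma isQuotientMap_zmk : IsQuotientMap (Quotient.mk (zSetoid m Sig K)) := by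
  letI := zSetoid m Sig K
  exact isQuotientMap_quotient_mk'

lemma continuous_signAct (g : Gtorus m) : Continuous (signAct g : (Fin m → ℝ) → _) := by
  refine continuous_pi fun j => ?_
  unfold signAct
  by_cases hg : g j = 0
  · simpa [hg] using continuous_apply j
  · exact (continuous_apply j).neg.congr fun a => by simp [hg]

def sAct (g : Gtorus m) (x : bigZ m Sig) : bigZ m Sig :=
  ⟨signAct g x.1, signAct_mem_bigZ g x.2⟩

lemma continuous_sAct (g : Gtorus m) : Continuous (sAct g : bigZ m Sig → _) :=
  ((continuous_signAct g).comp continuous_subtype_val).subtype_mk _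

lemma isOpenMap_qmk : IsOpenMap (Quotient.mk (bigSetoid m Sig K)) := by
  intro U hU
  have key : Quotient.mk (bigSetoid m Sig K) ⁻¹' (Quotient.mk (bigSetoid m Sig K) '' U)
      = ⋃ g ∈ (K : Set (Gtorus m)), sAct g ⁻¹' U := by
    ext y
    simp only [Set.mem_preimage, Set.mem_image, Set.mem_iUnion, SetLike.mem_coe]
    constructor
    · rintro ⟨x, hxU, hxy⟩
      obtain ⟨g, hg, hgx⟩ := Quotient.exact hxy
      refine ⟨g, hg, ?_⟩
      have : sAct g y = x := by
        apply Subtype.ext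
        show signAct g y.1 = x.1
        rw [← hgx, signAct_invol]
      rwa [this]
    · rintro ⟨g, hg, hgy⟩
      exact ⟨sAct g y, hgy, Quotient.sound ⟨g, hg, signAct_invol g y.1⟩⟩
  rw [← isQuotientMap_qmk.isOpen_preimage, key]
  exact isOpen_biUnion fun g _ => (continuous_sAct g).isOpen_preimage U hU

lemma isQuotientMap_qmk_prod :
    IsQuotientMap (Prod.map (Quotient.mk (bigSetoid m Sig K)) (id : unitInterval → _)) :=
  (isOpenMap_qmk.prodMap IsOpenMap.id).isQuotientMap
    (isQuotientMap_qmk.continuous.prodMap continuous_id)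
    (Function.Surjective.prodMap (fun q => Quotient.exists_rep q) Function.surjective_id)

end SDRaux

/- **Statement 10.** If `K ≤ G` acts freely on `Z_Σ`, then `Z_Σ/K ↪ 𝐙_Σ/K` is a strong
deformation retract, via a homotopy which can be chosen equivariant for the induced
action of `G/K`; in particular `Z_Σ/K → 𝐙_Σ/K` is a homotopy equivalence. -/

open SDRaux Topology in
/-- If `K ≤ G` acts freely on `Z_Σ`, then `Z_Σ/K ↪ 𝐙_Σ/K` is a strong
deformation retract, via a homotopy which can be chosen equivariant for the induced
action of `G/K`; in particular `Z_Σ/K → 𝐙_Σ/K` is a homotopy equivalence. -/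
theorem strong_deformation_retract_bigZ (m : ℕ) (Sig : Set (Finset (Fin m)))
    (hempty : ∅ ∈ Sig) (hdown : ∀ σ ∈ Sig, ∀ τ ⊆ σ, τ ∈ Sig)
    (K : AddSubgroup (Gtorus m))
    (hfree : ∀ g ∈ K, ∀ x ∈ Zma m Sig, signAct g x = x → g = 0) :
    (∃ F : C(BigQuot m Sig K × unitInterval, BigQuot m Sig K),
      (∀ z, F (z, 0) = z) ∧
      (∀ z, F (z, 1) ∈ Set.range (subQuot m Sig K hdown)) ∧
      (∀ w t, F (subQuot m Sig K hdown w, t) = subQuot m Sig K hdown w) ∧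
      (∀ g z t, F (bigAct m Sig K g z, t) = bigAct m Sig K g (F (z, t)))) ∧
    Nonempty (ContinuousMap.HomotopyEquiv (RealToricSpace m Sig K) (BigQuot m Sig K)) := by
  classical
  have Hmem : ∀ (x : bigZ m Sig) (t : unitInterval), Hfun Sig x.1 t.1 ∈ bigZ m Sig :=
    fun x t => Hfun_mem_bigZ x.2 t.2.1 t.2.2
  set Hs : bigZ m Sig → unitInterval → bigZ m Sig :=
    fun x t => ⟨Hfun Sig x.1 t.1, Hmem x t⟩ with hHs
  have Hdesc : ∀ (t : unitInterval) (x y : bigZ m Sig),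
      (bigSetoid m Sig K).r x y →
      (Quotient.mk (bigSetoid m Sig K) (Hs x t) : BigQuot m Sig K)
        = Quotient.mk (bigSetoid m Sig K) (Hs y t) := by
    rintro t x y ⟨g, hg, hxy⟩
    refine Quotient.sound ⟨g, hg, ?_⟩
    show signAct g (Hfun Sig x.1 t.1) = Hfun Sig y.1 t.1
    rw [← Hfun_signAct, hxy]
  set Fb : BigQuot m Sig K × unitInterval → BigQuot m Sig K :=
    fun p => Quotient.lift (fun x => Quotient.mk (bigSetoid m Sig K) (Hs x p.2))
      (fun x y h => Hdesc p.2 x y h) p.1 with hFb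
  have Fb_cont : Continuous Fb := by
    refine (isQuotientMap_qmk_prod (m := m) (Sig := Sig) (K := K)).continuous_iff.2 ?_
    exact (isQuotientMap_qmk (m := m) (Sig := Sig) (K := K)).continuous.comp
      ((continuous_Hsub Sig).subtype_mk _)
  have FbZero : ∀ z : BigQuot m Sig K, Fb (z, 0) = z := by
    refine fun z => Quotient.inductionOn z fun x => ?_
    show Quotient.mk (bigSetoid m Sig K) (Hs x 0) = Quotient.mk (bigSetoid m Sig K) x
    exact congrArg _ (Subtype.ext (Hfun_zero x.1))
  have FbOne : ∀ x : bigZ m Sig,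
      Fb (Quotient.mk (bigSetoid m Sig K) x, 1)
        = subQuot m Sig K hdown (Quotient.mk (zSetoid m Sig K)
            ⟨Hfun Sig x.1 1, Hfun_one_mem_Zma hempty x.2⟩) := fun x => rfl
  constructor
  · refine ⟨⟨Fb, Fb_cont⟩, FbZero, ?_, ?_, ?_⟩
    · refine fun z => Quotient.inductionOn z fun x => ?_
      exact ⟨_, (FbOne x).symm⟩
    · refine fun w t => Quotient.inductionOn w fun z => ?_
      show Quotient.mk (bigSetoid m Sig K) (Hs ⟨z.1, Zma_subset_bigZ hdown z.2⟩ t)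
          = Quotient.mk (bigSetoid m Sig K) ⟨z.1, Zma_subset_bigZ hdown z.2⟩
      exact congrArg _ (Subtype.ext (Hfun_fix z.2 t.1))
    · refine fun g z t => Quotient.inductionOn z fun x => ?_
      show Quotient.mk (bigSetoid m Sig K)
            (Hs ⟨signAct g x.1, signAct_mem_bigZ g x.2⟩ t)
          = Quotient.mk (bigSetoid m Sig K)
            ⟨signAct g (Hfun Sig x.1 t.1), signAct_mem_bigZ g (Hmem x t)⟩
      exact congrArg _ (Subtype.ext (Hfun_signAct g x.1 t.1))
  · have cont_sub : Continuous (subQuot m Sig K hdown) := by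
      refine (isQuotientMap_zmk (m := m) (Sig := Sig) (K := K)).continuous_iff.2 ?_
      exact (isQuotientMap_qmk (m := m) (Sig := Sig) (K := K)).continuous.comp
        (continuous_subtype_val.subtype_mk _)
    set rmap : bigZ m Sig → (Zma m Sig : Set (Fin m → ℝ)) :=
      fun x => ⟨Hfun Sig x.1 1, Hfun_one_mem_Zma hempty x.2⟩ with hrmap
    have rdesc : ∀ x y : bigZ m Sig, (bigSetoid m Sig K).r x y →
        (zSetoid m Sig K).r (rmap x) (rmap y) := by
      rintro x y ⟨g, hg, hxy⟩
      refine ⟨g, hg, ?_⟩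
      show signAct g (Hfun Sig x.1 1) = Hfun Sig y.1 1
      rw [← Hfun_signAct, hxy]
    set ρ : BigQuot m Sig K → RealToricSpace m Sig K := Quotient.map rmap rdesc with hρ
    have cont_ρ : Continuous ρ := by
      refine (isQuotientMap_qmk (m := m) (Sig := Sig) (K := K)).continuous_iff.2 ?_
      refine (isQuotientMap_zmk (m := m) (Sig := Sig) (K := K)).continuous.comp ?_
      refine Continuous.subtype_mk ?_ _
      exact (continuous_Hsub Sig).comp
        (continuous_id.prodMk (continuous_const (y := (1 : unitInterval))))
    refine ⟨⟨⟨subQuot m Sig K hdown, cont_sub⟩, ⟨ρ, cont_ρ⟩, ?_, ?_⟩⟩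
    · have hid : (ContinuousMap.mk ρ cont_ρ).comp
          (ContinuousMap.mk (subQuot m Sig K hdown) cont_sub)
          = ContinuousMap.id (RealToricSpace m Sig K) := by
        ext w
        refine Quotient.inductionOn w fun z => ?_
        show Quotient.mk (zSetoid m Sig K) (rmap ⟨z.1, Zma_subset_bigZ hdown z.2⟩)
            = Quotient.mk (zSetoid m Sig K) z
        exact congrArg _ (Subtype.ext (Hfun_fix z.2 1))
      rw [hid]
    · refine ⟨ContinuousMap.Homotopy.symm
        { toContinuousMap := ContinuousMap.mk (fun p => Fb (p.2, p.1))
            (Fb_cont.comp (continuous_snd.prodMk continuous_fst))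
          map_zero_left := fun z => FbZero z
          map_one_left := ?_ }⟩
      refine fun z => Quotient.inductionOn z fun x => ?_
      exact FbOne x

end
end
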